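/- Let Z* ∈ R^{n×r} have full column rank r with σ_r = σ_min(Z*)² > 0 the smallest eigenvalue of X* = Z* (Z*)^T. Then for every Z ∈ R^{n×r}, ‖Z Z^T − Z* (Z*)^T‖_F² ≥ (2√2 − 2) σ_r · d(Z, Z*)². -/

import Mathlib

open Matrix MeasureTheory ProbabilityTheory Real
open scoped BigOperators ENNReal

noncomputable section

/-- Frobenius norm of a real matrix. -/
def frobNorm {a b : ℕ} (M : Matrix (Fin a) (Fin b) ℝ) : ℝ :=
  Real.sqrt (∑ i, ∑ j, (M i j) ^ 2)

/-- Frobenius (trace) inner product `⟨M, N⟩ = trace (Mᵀ N)`. -/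
def frobInner {a b : ℕ} (M N : Matrix (Fin a) (Fin b) ℝ) : ℝ :=
  ∑ i, ∑ j, M i j * N i j

/-- Operator (spectral) norm of a real square matrix. -/
def opNorm {n : ℕ} (M : Matrix (Fin n) (Fin n) ℝ) : ℝ :=
  ‖LinearMap.toContinuousLinearMap (Matrix.toEuclideanLin M)‖

/-- An `r × r` real matrix is orthonormal if `U Uᵀ = Uᵀ U = I`. -/
def IsOrthoMat {r : ℕ} (U : Matrix (Fin r) (Fin r) ℝ) : Prop :=
  U * Uᵀ = 1 ∧ Uᵀ * U = 1

/-- The solution set `S̃ = {Z* U : U orthonormal}`. -/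
def solSet {n r : ℕ} (Zstar : Matrix (Fin n) (Fin r) ℝ) : Set (Matrix (Fin n) (Fin r) ℝ) :=
  {Zt | ∃ U, IsOrthoMat U ∧ Zt = Zstar * U}

/-- The distance `d(Z, Z*) = min_{Z̃ ∈ S̃} ‖Z − Z̃‖_F`. -/
def dSol {n r : ℕ} (Z Zstar : Matrix (Fin n) (Fin r) ℝ) : ℝ :=
  ⨅ Zt : solSet Zstar, frobNorm (Z - (Zt : Matrix (Fin n) (Fin r) ℝ))

/-- `Zbar` is a matrix in the solution set closest to `Z`. -/
def IsClosest {n r : ℕ} (Zstar Z Zbar : Matrix (Fin n) (Fin r) ℝ) : Prop :=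
  Zbar ∈ solSet Zstar ∧ ∀ Zt ∈ solSet Zstar, frobNorm (Z - Zbar) ≤ frobNorm (Z - Zt)

/-- The gradient `∇f(Z) = (1/m) Σ_i (trace(Zᵀ A_i Z) − b_i) A_i Z`. -/
def gradf {n r m : ℕ} (A : Fin m → Matrix (Fin n) (Fin n) ℝ) (b : Fin m → ℝ)
    (Z : Matrix (Fin n) (Fin r) ℝ) : Matrix (Fin n) (Fin r) ℝ :=
  (1 / (m : ℝ)) • ∑ i, (Matrix.trace (Zᵀ * A i * Z) - b i) • (A i * Z)

/-- Assumption A1 with parameter `δ`. -/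
def AssumpA1 {n m : ℕ} (A : Fin m → Matrix (Fin n) (Fin n) ℝ) (σ1 : ℝ) (r : ℕ)
    (δ : ℝ) : Prop :=
  ∀ u : Fin n → ℝ, Real.sqrt (∑ i, u i ^ 2) ≤ Real.sqrt σ1 →
    opNorm ((1 / (m : ℝ)) • ∑ i, (u ⬝ᵥ (A i).mulVec u) • A i - (2 : ℝ) • vecMulVec u u)
      ≤ δ / r

/-- Assumption A2 with parameter `δ`. -/
def AssumpA2 {n r m : ℕ} (A : Fin m → Matrix (Fin n) (Fin n) ℝ)
    (Zstar : Matrix (Fin n) (Fin r) ℝ) (δ : ℝ) : Prop :=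
  ∀ Zt ∈ solSet Zstar, ∀ s k : Fin r,
    opNorm ((1 / (m : ℝ)) •
        ∑ i, (2 : ℝ) • (A i * vecMulVec (fun j => Zt j s) (fun j => Zt j k) * A i)
      - ((2 * ((fun j => Zt j s) ⬝ᵥ fun j => Zt j k)) • (1 : Matrix (Fin n) (Fin n) ℝ)
          + (2 : ℝ) • vecMulVec (fun j => Zt j k) (fun j => Zt j s)))
      ≤ δ / r


lemma frobNorm_sq {a b : ℕ} (M : Matrix (Fin a) (Fin b) ℝ) :
    frobNorm M ^ 2 = frobInner M M := by
  rw [frobNorm, frobInner, Real.sq_sqrt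
    (by positivity)]
  exact Finset.sum_congr rfl fun i _ => Finset.sum_congr rfl fun j _ => (sq (M i j)) ▸ rfl



lemma frobInner_eq_trace {a b : ℕ} (M N : Matrix (Fin a) (Fin b) ℝ) :
    frobInner M N = Matrix.trace (Mᵀ * N) := by
  rw [frobInner, Matrix.trace, Finset.sum_comm]
  refine Finset.sum_congr rfl fun j _ => ?_
  simp [Matrix.mul_apply, Matrix.diag]

lemma frobInner_self_nonneg {a b : ℕ} (M : Matrix (Fin a) (Fin b) ℝ) :
    0 ≤ frobInner M M :=
  Finset.sum_nonneg fun i _ => Finset.sum_nonneg fun j _ => mul_self_nonneg _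

lemma frobInner_CS {a b : ℕ} (M N : Matrix (Fin a) (Fin b) ℝ) :
    (frobInner M N) ^ 2 ≤ frobInner M M * frobInner N N := by
  have h : ∀ (X Y : Matrix (Fin a) (Fin b) ℝ),
      frobInner X Y = ∑ p : Fin a × Fin b, X p.1 p.2 * Y p.1 p.2 := by
    intro X Y; rw [frobInner]; exact (Fintype.sum_prod_type (f := fun p : Fin a × Fin b => X p.1 p.2 * Y p.1 p.2)).symm
  rw [h, h, h]
  have := Finset.sum_mul_sq_le_sq_mul_sq Finset.univ
    (fun p : Fin a × Fin b => M p.1 p.2) (fun p => N p.1 p.2)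
  simpa [sq] using this

lemma trace_HtHQ {n r : ℕ} (H : Matrix (Fin n) (Fin r) ℝ) (Q : Matrix (Fin r) (Fin r) ℝ)
    (hQ : ∀ v : Fin r → ℝ, 0 ≤ v ⬝ᵥ Q.mulVec v) : 0 ≤ Matrix.trace (Hᵀ * H * Q) := by
  have key : Matrix.trace (Hᵀ * H * Q)
      = ∑ i : Fin n, (fun j => H i j) ⬝ᵥ Q.mulVec (fun j => H i j) := by
    rw [Matrix.mul_assoc, ← frobInner_eq_trace]
    refine Finset.sum_congr rfl fun i _ => ?_
    simp only [dotProduct, Matrix.mul_apply, Matrix.mulVec, Finset.mul_sum]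
    rw [Finset.sum_comm]
    exact Finset.sum_congr rfl fun k _ => Finset.sum_congr rfl fun j _ => by ring
  rw [key]
  exact Finset.sum_nonneg fun i _ => hQ _


lemma quadform_diag_nonneg {r : ℕ} (N : Matrix (Fin r) (Fin r) ℝ) (d : Fin r → ℝ)
    (hd : ∀ k, 0 ≤ d k) (v : Fin r → ℝ) :
    0 ≤ v ⬝ᵥ (N * Matrix.diagonal d * Nᵀ).mulVec v := by
  have key : v ⬝ᵥ (N * Matrix.diagonal d * Nᵀ).mulVec v
      = ∑ k, d k * (Matrix.vecMul v N k) ^ 2 := by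
    rw [Matrix.dotProduct_mulVec, ← Matrix.vecMul_vecMul, ← Matrix.vecMul_vecMul]
    simp only [dotProduct, Matrix.vecMul_diagonal, Matrix.vecMul_transpose, Matrix.mulVec,
      dotProduct, Finset.sum_mul, Finset.mul_sum]
    rw [Finset.sum_comm]
    refine Finset.sum_congr rfl fun k _ => ?_
    have hv : Matrix.vecMul v N k = ∑ x, v x * N x k := by
      simp [Matrix.vecMul, dotProduct]
    have step : ∑ x, N x k * (Matrix.vecMul v N k * d k) * v x
        = Matrix.vecMul v N k * d k * ∑ x, v x * N x k := by
      rw [Finset.mul_sum]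
      exact Finset.sum_congr rfl fun x _ => by ring
    rw [step, hv]
    ring
  rw [key]
  exact Finset.sum_nonneg fun k _ => mul_nonneg (hd k) (sq_nonneg _)



lemma isOrthoMat_one {r : ℕ} : IsOrthoMat (1 : Matrix (Fin r) (Fin r) ℝ) := by
  constructor <;> simp

lemma isOrthoMat_mul {r : ℕ} {U W : Matrix (Fin r) (Fin r) ℝ}
    (hU : IsOrthoMat U) (hW : IsOrthoMat W) : IsOrthoMat (U * W) := by
  obtain ⟨hU1, hU2⟩ := hU; obtain ⟨hW1, hW2⟩ := hW
  constructor
  · rw [Matrix.transpose_mul]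
    calc U * W * (Wᵀ * Uᵀ) = U * (W * Wᵀ) * Uᵀ := by noncomm_ring
    _ = 1 := by rw [hW1, Matrix.mul_one, hU1]
  · rw [Matrix.transpose_mul]
    calc Wᵀ * Uᵀ * (U * W) = Wᵀ * (Uᵀ * U) * W := by noncomm_ring
    _ = 1 := by rw [hU2, Matrix.mul_one, hW2]

lemma householder_ortho {r : ℕ} (v : Fin r → ℝ) (hv : v ⬝ᵥ v = 1) :
    IsOrthoMat (1 - (Matrix.vecMulVec v v + Matrix.vecMulVec v v)) := by
  set M := Matrix.vecMulVec v v with hM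
  have hsymm : Mᵀ = M := by
    ext i j; simp [hM, Matrix.vecMulVec_apply, mul_comm]
  have hsq : M * M = M := by
    ext i j
    simp only [hM, Matrix.mul_apply, Matrix.vecMulVec_apply]
    calc ∑ k, v i * v k * (v k * v j) = (v i * v j) * ∑ k, v k * v k := by
          rw [Finset.mul_sum]; exact Finset.sum_congr rfl fun k _ => by ring
    _ = v i * v j := by rw [show (∑ k, v k * v k) = v ⬝ᵥ v from rfl, hv, mul_one]
  have key : (1 - (M + M)) * (1 - (M + M)) = 1 := by
    have expand : (1 - (M + M)) * (1 - (M + M))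
        = 1 - (M + M) - (M + M) + (M*M + M*M + (M*M + M*M)) := by noncomm_ring
    rw [expand, hsq]; abel
  have htr : (1 - (M + M))ᵀ = 1 - (M + M) := by
    simp [Matrix.transpose_sub, Matrix.transpose_add, hsymm]
  exact ⟨by rw [htr, key], by rw [htr, key]⟩

lemma trace_mul_stdBasis {r : ℕ} (P : Matrix (Fin r) (Fin r) ℝ) (i j : Fin r) :
    Matrix.trace (P * Matrix.single i j (1:ℝ)) = P j i := by
  rw [Matrix.trace]
  rw [Finset.sum_eq_single j]
  · simp [Matrix.diag]
  · intro b _ hb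
    simp [Matrix.diag, Matrix.mul_single_apply_of_ne _ _ _ b b hb]
  · simp

lemma trace_mul_vecMulVec {r : ℕ} (P : Matrix (Fin r) (Fin r) ℝ) (v : Fin r → ℝ) :
    Matrix.trace (P * Matrix.vecMulVec v v) = v ⬝ᵥ P.mulVec v := by
  rw [Matrix.trace, dotProduct]
  refine Finset.sum_congr rfl fun a _ => ?_
  simp only [Matrix.diag, Matrix.mul_apply, Matrix.vecMulVec_apply, Matrix.mulVec, dotProduct,
    Finset.mul_sum]
  refine Finset.sum_congr rfl fun k _ => by ring



lemma stdBasis_transpose {r : ℕ} (a b : Fin r) (x : ℝ) :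
    (Matrix.single a b x)ᵀ = Matrix.single b a x := by
  ext p q
  simp [Matrix.single, Matrix.transpose_apply, and_comm]

section planar
variable {r : ℕ} {i j : Fin r} (hij : i ≠ j) (c s : ℝ)

private lemma planar_key (hij : i ≠ j) (c s : ℝ) (hcs : c ^ 2 + s ^ 2 = 1) :
    (Matrix.single i i (c-1) + Matrix.single j j (c-1)
      + Matrix.single j i s - Matrix.single i j s) *
    (Matrix.single i i (c-1) + Matrix.single j j (c-1)
      + Matrix.single i j s - Matrix.single j i s)
    = Matrix.single i i (-(2*(c-1))) + Matrix.single j j (-(2*(c-1))) := by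
  set x := c - 1 with hx
  have T11 : Matrix.single i i x * Matrix.single i i x
      = Matrix.single i i (x*x) := Matrix.single_mul_single_same x i i i x
  have T22 : Matrix.single j j x * Matrix.single j j x
      = Matrix.single j j (x*x) := Matrix.single_mul_single_same x j j j x
  have T14 : Matrix.single i i x * Matrix.single i j s
      = Matrix.single i j (x*s) := Matrix.single_mul_single_same x i i j s
  have T23 : Matrix.single j j x * Matrix.single j i s
      = Matrix.single j i (x*s) := Matrix.single_mul_single_same x j j i s
  have T31 : Matrix.single j i s * Matrix.single i i x
      = Matrix.single j i (s*x) := Matrix.single_mul_single_same s j i i x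
  have T34 : Matrix.single j i s * Matrix.single i j s
      = Matrix.single j j (s*s) := Matrix.single_mul_single_same s j i j s
  have T42 : Matrix.single i j s * Matrix.single j j x
      = Matrix.single i j (s*x) := Matrix.single_mul_single_same s i j j x
  have T43 : Matrix.single i j s * Matrix.single j i s
      = Matrix.single i i (s*s) := Matrix.single_mul_single_same s i j i s
  have Z12 : Matrix.single i i x * Matrix.single j j x = 0 :=
    Matrix.single_mul_single_of_ne x i i j hij x
  have Z13 : Matrix.single i i x * Matrix.single j i s = 0 :=
    Matrix.single_mul_single_of_ne x i i j hij s
  have Z21 : Matrix.single j j x * Matrix.single i i x = 0 :=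
    Matrix.single_mul_single_of_ne x j j i hij.symm x
  have Z24 : Matrix.single j j x * Matrix.single i j s = 0 :=
    Matrix.single_mul_single_of_ne x j j i hij.symm s
  have Z32 : Matrix.single j i s * Matrix.single j j x = 0 :=
    Matrix.single_mul_single_of_ne s j i j hij x
  have Z33 : Matrix.single j i s * Matrix.single j i s = 0 :=
    Matrix.single_mul_single_of_ne s j i j hij s
  have Z41 : Matrix.single i j s * Matrix.single i i x = 0 :=
    Matrix.single_mul_single_of_ne s i j i hij.symm x
  have Z44 : Matrix.single i j s * Matrix.single i j s = 0 :=
    Matrix.single_mul_single_of_ne s i j i hij.symm s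
  simp only [add_mul, sub_mul, mul_add, mul_sub]
  simp only [T11, T22, T14, T23, T31, T34, T42, T43, Z12, Z13, Z21, Z24, Z32, Z33, Z41, Z44]
  have hxx : x * x + s * s = -(2*x) := by rw [hx]; nlinarith [hcs]
  ext p q
  simp only [Matrix.add_apply, Matrix.sub_apply, Matrix.zero_apply, Matrix.single,
    Matrix.of_apply]
  split_ifs <;> simp_all <;> linarith [hxx]

lemma planar_ortho (hij : i ≠ j) (c s : ℝ) (hcs : c ^ 2 + s ^ 2 = 1) :
    IsOrthoMat (1 + (Matrix.single i i (c-1) + Matrix.single j j (c-1)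
      + Matrix.single j i s - Matrix.single i j s)) := by
  set A := Matrix.single i i (c-1) + Matrix.single j j (c-1)
      + Matrix.single j i s - Matrix.single i j s with hA
  have hAt : Aᵀ = Matrix.single i i (c-1) + Matrix.single j j (c-1)
      + Matrix.single i j s - Matrix.single j i s := by
    simp [hA, Matrix.transpose_add, Matrix.transpose_sub, stdBasis_transpose]
  have key1 : A * Aᵀ = Matrix.single i i (-(2*(c-1)))
      + Matrix.single j j (-(2*(c-1))) := by
    rw [hAt, hA]; exact planar_key hij c s hcs
  have key2 : Aᵀ * A = Matrix.single i i (-(2*(c-1)))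
      + Matrix.single j j (-(2*(c-1))) := by
    rw [hAt, hA]
    have := planar_key hij.symm c s hcs
    -- planar_key with i and j swapped gives exactly this product
    calc (Matrix.single i i (c-1) + Matrix.single j j (c-1)
      + Matrix.single i j s - Matrix.single j i s) *
        (Matrix.single i i (c-1) + Matrix.single j j (c-1)
      + Matrix.single j i s - Matrix.single i j s)
        = (Matrix.single j j (c-1) + Matrix.single i i (c-1)
      + Matrix.single i j s - Matrix.single j i s) *
        (Matrix.single j j (c-1) + Matrix.single i i (c-1)
      + Matrix.single j i s - Matrix.single i j s) := by congr 1 <;> abel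
    _ = Matrix.single j j (-(2*(c-1))) + Matrix.single i i (-(2*(c-1))) := this
    _ = _ := by abel
  have hsum : A + Aᵀ = Matrix.single i i (2*(c-1)) + Matrix.single j j (2*(c-1)) := by
    rw [hAt, hA]
    ext p q
    simp only [Matrix.add_apply, Matrix.sub_apply, Matrix.single, Matrix.of_apply]
    split_ifs <;> simp_all <;> ring
  constructor
  · have expand : (1 + A) * (1 + A)ᵀ = 1 + ((A + Aᵀ) + A * Aᵀ) := by
      rw [Matrix.transpose_add, Matrix.transpose_one]; noncomm_ring
    rw [expand, hsum, key1]
    have : Matrix.single i i (2*(c-1)) + Matrix.single j j (2*(c-1)) +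
        (Matrix.single i i (-(2*(c-1))) + Matrix.single j j (-(2*(c-1)))) = 0 := by
      ext p q
      simp only [Matrix.add_apply, Matrix.zero_apply, Matrix.single, Matrix.of_apply]
      split_ifs <;> ring
    rw [this, add_zero]
  · have expand : (1 + A)ᵀ * (1 + A) = 1 + ((A + Aᵀ) + Aᵀ * A) := by
      rw [Matrix.transpose_add, Matrix.transpose_one]; noncomm_ring
    rw [expand, hsum, key2]
    have : Matrix.single i i (2*(c-1)) + Matrix.single j j (2*(c-1)) +
        (Matrix.single i i (-(2*(c-1))) + Matrix.single j j (-(2*(c-1)))) = 0 := by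
      ext p q
      simp only [Matrix.add_apply, Matrix.zero_apply, Matrix.single, Matrix.of_apply]
      split_ifs <;> ring
    rw [this, add_zero]

end planar

set_option maxHeartbeats 1000000 in
lemma exists_procrustes {r : ℕ} (M : Matrix (Fin r) (Fin r) ℝ) :
    ∃ U : Matrix (Fin r) (Fin r) ℝ, IsOrthoMat U ∧ (M * U)ᵀ = M * U ∧
      ∀ v : Fin r → ℝ, 0 ≤ v ⬝ᵥ (M * U).mulVec v := by
  classical
  set O : Set (Matrix (Fin r) (Fin r) ℝ) := {U | IsOrthoMat U} with hO
  have hO1 : (1 : Matrix (Fin r) (Fin r) ℝ) ∈ O := isOrthoMat_one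
  -- compactness of O
  have hbox : IsCompact {U : Matrix (Fin r) (Fin r) ℝ | ∀ a b, U a b ∈ Set.Icc (-1:ℝ) 1} := by
    have h1 : IsCompact (Set.pi Set.univ (fun _ : Fin r => Set.pi Set.univ
        fun _ : Fin r => Set.Icc (-1:ℝ) 1) : Set (Matrix (Fin r) (Fin r) ℝ)) :=
      isCompact_univ_pi fun _ => isCompact_univ_pi fun _ => isCompact_Icc
    refine (congrArg (IsCompact (X := Matrix (Fin r) (Fin r) ℝ)) (?_ : {U : Fin r → Fin r → ℝ | ∀ a b, U a b ∈ Set.Icc (-1:ℝ) 1} = Set.pi Set.univ fun _ => Set.pi Set.univ fun _ => Set.Icc (-1:ℝ) 1)).mpr h1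
    ext U
    constructor
    · intro h
      rw [Set.mem_univ_pi]; intro a
      rw [Set.mem_univ_pi]; intro b
      exact h a b
    · intro h a b
      have := Set.mem_univ_pi.mp h a
      exact Set.mem_univ_pi.mp this b
  have hOclosed : IsClosed O := by
    have c1 : Continuous fun U : Matrix (Fin r) (Fin r) ℝ => U * Uᵀ :=
      continuous_id.matrix_mul continuous_id.matrix_transpose
    have c2 : Continuous fun U : Matrix (Fin r) (Fin r) ℝ => Uᵀ * U :=
      continuous_id.matrix_transpose.matrix_mul continuous_id
    have : O = (fun U : Matrix (Fin r) (Fin r) ℝ => U * Uᵀ) ⁻¹' {1}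
        ∩ (fun U : Matrix (Fin r) (Fin r) ℝ => Uᵀ * U) ⁻¹' {1} := by
      ext U; simp [hO, IsOrthoMat]
    rw [this]
    exact (isClosed_singleton.preimage c1).inter (isClosed_singleton.preimage c2)
  have hsub : O ⊆ {U : Matrix (Fin r) (Fin r) ℝ | ∀ a b, U a b ∈ Set.Icc (-1:ℝ) 1} := by
    intro U hU a b
    have h1 : (U * Uᵀ) a a = 1 := by rw [hU.1]; simp
    have h2 : ∑ k, U a k * U a k = 1 := by
      rw [← h1, Matrix.mul_apply]; simp [Matrix.transpose_apply]
    have h3 : U a b * U a b ≤ 1 := by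
      rw [← h2]
      exact Finset.single_le_sum (f := fun k => U a k * U a k)
        (fun k _ => mul_self_nonneg _) (Finset.mem_univ b)
    constructor <;> nlinarith [h3]
  have hOc : IsCompact O := hbox.of_isClosed_subset hOclosed hsub
  have hcont : Continuous fun U : Matrix (Fin r) (Fin r) ℝ => Matrix.trace (M * U) :=
    (continuous_const.matrix_mul continuous_id).matrix_trace
  obtain ⟨U, hUO, hmax⟩ := hOc.exists_isMaxOn ⟨1, hO1⟩ hcont.continuousOn
  set P := M * U with hP
  have hdom : ∀ W, IsOrthoMat W → Matrix.trace (P * W) ≤ Matrix.trace P := by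
    intro W hW
    have := hmax (isOrthoMat_mul hUO hW)
    simpa [hP, Matrix.mul_assoc] using this
  -- PSD
  have hpsd : ∀ v : Fin r → ℝ, 0 ≤ v ⬝ᵥ P.mulVec v := by
    have hunit : ∀ v : Fin r → ℝ, v ⬝ᵥ v = 1 → 0 ≤ v ⬝ᵥ P.mulVec v := by
      intro v hv
      have htr : Matrix.trace (P * (1 - (Matrix.vecMulVec v v + Matrix.vecMulVec v v)))
          = Matrix.trace P - 2 * (v ⬝ᵥ P.mulVec v) := by
        rw [Matrix.mul_sub, Matrix.mul_one, Matrix.mul_add, Matrix.trace_sub, Matrix.trace_add,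
          trace_mul_vecMulVec]
        ring
      have := hdom _ (householder_ortho v hv)
      rw [htr] at this
      linarith
    intro v
    rcases eq_or_ne (v ⬝ᵥ v) 0 with h0 | h0
    · have hv0 : v = 0 := by
        funext i
        have hs : ∑ k, v k * v k = 0 := h0
        have h5 := (Finset.sum_eq_zero_iff_of_nonneg (fun k _ => mul_self_nonneg (v k))).mp hs i
          (Finset.mem_univ i)
        exact mul_self_eq_zero.mp h5
      simp [hv0]
    · have hpos : 0 < v ⬝ᵥ v := lt_of_le_of_ne (Finset.sum_nonneg fun k _ => mul_self_nonneg _)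
        (Ne.symm h0)
      set t := Real.sqrt (v ⬝ᵥ v) with ht
      have htpos : 0 < t := Real.sqrt_pos.mpr hpos
      have ht2 : t * t = v ⬝ᵥ v := Real.mul_self_sqrt hpos.le
      have hu : (t⁻¹ • v) ⬝ᵥ (t⁻¹ • v) = 1 := by
        rw [smul_dotProduct, dotProduct_smul, smul_eq_mul, smul_eq_mul, ← ht2]
        field_simp
      have := hunit _ hu
      rw [smul_dotProduct, Matrix.mulVec_smul, dotProduct_smul] at this
      have h4 : 0 ≤ t⁻¹ * (t⁻¹ * (v ⬝ᵥ P.mulVec v)) := by simpa using this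
      have hti : 0 < t⁻¹ := inv_pos.mpr htpos
      nlinarith [h4, hti, mul_pos hti hti]
  -- symmetry
  have hsymm : Pᵀ = P := by
    ext b a
    rw [Matrix.transpose_apply]
    rcases eq_or_ne a b with rfl | hab
    · rfl
    · set α := P a a + P b b with hα
      set β := P a b - P b a with hβ
      have hPaa : 0 ≤ P a a := by
        have := hpsd (Pi.single a 1)
        simpa [Matrix.mulVec_single, dotProduct, Pi.single_apply] using this
      have hPbb : 0 ≤ P b b := by
        have := hpsd (Pi.single b 1)
        simpa [Matrix.mulVec_single, dotProduct, Pi.single_apply] using this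
      have hαnn : 0 ≤ α := by rw [hα]; linarith
      by_contra hne
      have hβne : β ≠ 0 := fun h => hne (by rw [hβ] at h; linarith)
      set ρ := Real.sqrt (α^2 + β^2) with hρ
      have hρpos : 0 < ρ := Real.sqrt_pos.mpr (by positivity)
      have hρ2 : ρ^2 = α^2 + β^2 := Real.sq_sqrt (by positivity)
      have hcs : (α/ρ)^2 + (β/ρ)^2 = 1 := by
        field_simp
        linarith [hρ2]
      have htr : Matrix.trace (P * (1 + (Matrix.single a a (α/ρ-1)
          + Matrix.single b b (α/ρ-1)
          + Matrix.single b a (β/ρ) - Matrix.single a b (β/ρ))))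
          = Matrix.trace P + (α/ρ-1) * α + (β/ρ) * β := by
        have e1 : ∀ (p q : Fin r) (x : ℝ), Matrix.trace (P * Matrix.single p q x)
            = x * P q p := by
          intro p q x
          have : Matrix.single p q x = x • Matrix.single p q (1:ℝ) := by
            rw [Matrix.smul_single]; norm_num
          rw [this, Matrix.mul_smul, Matrix.trace_smul, trace_mul_stdBasis]
          simp
        rw [Matrix.mul_add, Matrix.mul_one, Matrix.trace_add, Matrix.mul_sub, Matrix.mul_add,
          Matrix.mul_add, Matrix.trace_sub, Matrix.trace_add, Matrix.trace_add, e1, e1, e1, e1]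
        rw [hα, hβ]
        ring
      have := hdom _ (planar_ortho hab (α/ρ) (β/ρ) hcs)
      rw [htr] at this
      have key : (α/ρ-1) * α + (β/ρ) * β ≤ 0 := by linarith
      have expand : (α/ρ-1) * α + (β/ρ) * β = ρ - α := by
        field_simp
        nlinarith [hρ2]
      rw [expand] at key
      have : ρ ≤ α := by linarith
      have : ρ^2 ≤ α^2 := by nlinarith [hρpos]
      rw [hρ2] at this
      have : β^2 ≤ 0 := by linarith
      exact hβne (by nlinarith [sq_nonneg β])
  exact ⟨U, hUO, hsymm, hpsd⟩

set_option maxHeartbeats 1000000 in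
theorem frobenius_lower_bound_dist {n r : ℕ} (hr : 0 < r)
(Zstar : Matrix (Fin n) (Fin r) ℝ)
    (sig : Fin r → ℝ) (hpos : ∀ s, 0 < sig s)
    (hmono : ∀ s t : Fin r, s ≤ t → sig t ≤ sig s)
    (hspec : ∃ V, IsOrthoMat V ∧ Zstarᵀ * Zstar = V * Matrix.diagonal sig * Vᵀ)
    (Z : Matrix (Fin n) (Fin r) ℝ) :
    frobNorm (Z * Zᵀ - Zstar * Zstarᵀ) ^ 2 ≥
      (2 * Real.sqrt 2 - 2) * (sig ⟨r - 1, Nat.sub_lt hr Nat.one_pos⟩) * (dSol Z Zstar) ^ 2 := by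
  classical
  obtain ⟨V, hV, hVspec⟩ := hspec
  obtain ⟨U, hU, hPsym', hpsd'⟩ := exists_procrustes (Zᵀ * Zstar)
  obtain ⟨σ, hσ⟩ : ∃ x : ℝ, x = sig ⟨r - 1, Nat.sub_lt hr Nat.one_pos⟩ := ⟨_, rfl⟩
  obtain ⟨Zb, hZb⟩ : ∃ X, X = Zstar * U := ⟨_, rfl⟩
  obtain ⟨A, hA⟩ : ∃ X, X = Zᵀ * Z := ⟨_, rfl⟩
  obtain ⟨Bm, hBm⟩ : ∃ X, X = Zbᵀ * Zb := ⟨_, rfl⟩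
  obtain ⟨P, hP⟩ : ∃ X, X = Zᵀ * Zb := ⟨_, rfl⟩
  have hPM : P = Zᵀ * Zstar * U := by rw [hP, hZb, Matrix.mul_assoc]
  have hPsym : Pᵀ = P := by rw [hPM]; exact hPsym'
  have hpsd : ∀ v : Fin r → ℝ, 0 ≤ v ⬝ᵥ P.mulVec v := by rw [hPM]; exact hpsd'
  obtain ⟨S, hS⟩ : ∃ X, X = Bm - P := ⟨_, rfl⟩
  obtain ⟨Δ, hΔ⟩ : ∃ X, X = A + Bm - P - P := ⟨_, rfl⟩
  obtain ⟨H, hH⟩ : ∃ X, X = Z - Zb := ⟨_, rfl⟩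
  have hPt : Zbᵀ * Z = P := by
    calc Zbᵀ * Z = (Zᵀ * Zb)ᵀ := by rw [Matrix.transpose_mul, Matrix.transpose_transpose]
    _ = Pᵀ := by rw [← hP]
    _ = P := hPsym
  have hHH : Hᵀ * H = Δ := by
    rw [hH, hΔ, Matrix.transpose_sub, Matrix.sub_mul, Matrix.mul_sub, Matrix.mul_sub,
      hPt, ← hA, ← hBm, ← hP]
    abel
  have hAsym : Aᵀ = A := by rw [hA, Matrix.transpose_mul, Matrix.transpose_transpose]
  have hBsym : Bmᵀ = Bm := by rw [hBm, Matrix.transpose_mul, Matrix.transpose_transpose]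
  have hSsym : Sᵀ = S := by rw [hS, Matrix.transpose_sub, hBsym, hPsym]
  have hΔsym : Δᵀ = Δ := by
    rw [hΔ, Matrix.transpose_sub, Matrix.transpose_sub, Matrix.transpose_add, hAsym, hBsym, hPsym]
  obtain ⟨ta, hta⟩ : ∃ x : ℝ, x = Matrix.trace (Δ * Δ) := ⟨_, rfl⟩
  obtain ⟨tp, htp⟩ : ∃ x : ℝ, x = Matrix.trace (Δ * P) := ⟨_, rfl⟩
  obtain ⟨ts, hts⟩ : ∃ x : ℝ, x = Matrix.trace (S * S) := ⟨_, rfl⟩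
  obtain ⟨tb, htb⟩ : ∃ x : ℝ, x = Matrix.trace (Δ * S) := ⟨_, rfl⟩
  obtain ⟨tΔ, htΔ⟩ : ∃ x : ℝ, x = Matrix.trace Δ := ⟨_, rfl⟩
  -- the main trace identity
  have identity : Matrix.trace (A * A) + Matrix.trace (Bm * Bm) - 2 * Matrix.trace (P * P)
      = ta + 2 * tp + 2 * ts - 2 * tb := by
    rw [hta, htp, hts, htb, hΔ, hS]
    simp only [Matrix.sub_mul, Matrix.mul_sub, Matrix.add_mul, Matrix.mul_add,
      Matrix.trace_sub, Matrix.trace_add]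
    rw [Matrix.trace_mul_comm Bm A, Matrix.trace_mul_comm P A, Matrix.trace_mul_comm P Bm]
    ring
  -- LHS equals the trace expression
  have hZZb : Zstar * Zstarᵀ = Zb * Zbᵀ := by
    rw [hZb, Matrix.transpose_mul, show Zstar * U * (Uᵀ * Zstarᵀ)
      = Zstar * (U * Uᵀ) * Zstarᵀ by simp only [Matrix.mul_assoc], hU.1, Matrix.mul_one]
  have hLHS : frobNorm (Z * Zᵀ - Zstar * Zstarᵀ) ^ 2
      = Matrix.trace (A * A) + Matrix.trace (Bm * Bm) - 2 * Matrix.trace (P * P) := by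
    rw [frobNorm_sq, frobInner_eq_trace, hZZb]
    have hDt : (Z * Zᵀ - Zb * Zbᵀ)ᵀ = Z * Zᵀ - Zb * Zbᵀ := by
      rw [Matrix.transpose_sub, Matrix.transpose_mul, Matrix.transpose_mul,
        Matrix.transpose_transpose, Matrix.transpose_transpose]
    rw [hDt]
    simp only [Matrix.sub_mul, Matrix.mul_sub, Matrix.trace_sub]
    have e1 : Matrix.trace (Z * Zᵀ * (Z * Zᵀ)) = Matrix.trace (A * A) := by
      rw [show Z * Zᵀ * (Z * Zᵀ) = Z * (Zᵀ * Z * Zᵀ) by simp only [Matrix.mul_assoc],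
        Matrix.trace_mul_comm, show Zᵀ * Z * Zᵀ * Z = A * A by
          rw [hA]; simp only [Matrix.mul_assoc]]
    have e2 : Matrix.trace (Z * Zᵀ * (Zb * Zbᵀ)) = Matrix.trace (P * P) := by
      rw [show Z * Zᵀ * (Zb * Zbᵀ) = Z * (Zᵀ * Zb * Zbᵀ) by simp only [Matrix.mul_assoc],
        Matrix.trace_mul_comm, show Zᵀ * Zb * Zbᵀ * Z = P * (Zbᵀ * Z) by
          rw [hP]; simp only [Matrix.mul_assoc],
        hPt]
    have e3 : Matrix.trace (Zb * Zbᵀ * (Z * Zᵀ)) = Matrix.trace (P * P) := by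
      rw [show Zb * Zbᵀ * (Z * Zᵀ) = Zb * (Zbᵀ * Z * Zᵀ) by simp only [Matrix.mul_assoc],
        Matrix.trace_mul_comm, show Zbᵀ * Z * Zᵀ * Zb = P * (Zᵀ * Zb) by
          rw [hPt]; simp only [Matrix.mul_assoc],
        ← hP]
    have e4 : Matrix.trace (Zb * Zbᵀ * (Zb * Zbᵀ)) = Matrix.trace (Bm * Bm) := by
      rw [show Zb * Zbᵀ * (Zb * Zbᵀ) = Zb * (Zbᵀ * Zb * Zbᵀ) by simp only [Matrix.mul_assoc],
        Matrix.trace_mul_comm, show Zbᵀ * Zb * Zbᵀ * Zb = Bm * Bm by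
          rw [hBm]; simp only [Matrix.mul_assoc]]
    rw [e1, e2, e3, e4]
    ring
  -- nonnegativity and Cauchy-Schwarz
  have hta0 : 0 ≤ ta := by
    rw [hta, show Δ * Δ = Δᵀ * Δ by rw [hΔsym], ← frobInner_eq_trace]
    exact frobInner_self_nonneg Δ
  have hts0 : 0 ≤ ts := by
    rw [hts, show S * S = Sᵀ * S by rw [hSsym], ← frobInner_eq_trace]
    exact frobInner_self_nonneg S
  have htp0 : 0 ≤ tp := by
    rw [htp, ← hHH, Matrix.mul_assoc]
    exact (Matrix.mul_assoc Hᵀ H P) ▸ trace_HtHQ H P hpsd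
  have hCS : tb ^ 2 ≤ ta * ts := by
    rw [htb, hta, hts, show Δ * S = Δᵀ * S by rw [hΔsym], ← frobInner_eq_trace,
      show Δ * Δ = Δᵀ * Δ by rw [hΔsym], ← frobInner_eq_trace,
      show S * S = Sᵀ * S by rw [hSsym], ← frobInner_eq_trace]
    exact frobInner_CS Δ S
  -- the eigenvalue bound : σ * tΔ ≤ trace (Δ * Bm) = tp + tb
  have hBspec : Bm = (Uᵀ * V) * Matrix.diagonal sig * (Uᵀ * V)ᵀ := by
    rw [hBm, hZb, Matrix.transpose_mul, show Uᵀ * Zstarᵀ * (Zstar * U)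
      = Uᵀ * (Zstarᵀ * Zstar) * U by simp only [Matrix.mul_assoc], hVspec,
      Matrix.transpose_mul]
    simp only [Matrix.mul_assoc, Matrix.transpose_transpose]
  have hNNt : (Uᵀ * V) * (Uᵀ * V)ᵀ = 1 := by
    rw [Matrix.transpose_mul, Matrix.transpose_transpose, show Uᵀ * V * (Vᵀ * U)
      = Uᵀ * (V * Vᵀ) * U by simp only [Matrix.mul_assoc], hV.1, Matrix.mul_one, hU.2]
  have hquad : ∀ v : Fin r → ℝ, 0 ≤ v ⬝ᵥ (Bm - σ • (1 : Matrix (Fin r) (Fin r) ℝ)).mulVec v := by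
    intro v
    have hdiag : Matrix.diagonal (fun k => sig k - σ)
        = Matrix.diagonal sig - σ • (1 : Matrix (Fin r) (Fin r) ℝ) := by
      rw [Matrix.smul_one_eq_diagonal, Matrix.diagonal_sub]
    have hsplit : (Uᵀ * V) * Matrix.diagonal (fun k => sig k - σ) * (Uᵀ * V)ᵀ
        = Bm - σ • (1 : Matrix (Fin r) (Fin r) ℝ) := by
      rw [hdiag, Matrix.mul_sub, Matrix.sub_mul, ← hBspec, Matrix.mul_smul, Matrix.mul_one,
        Matrix.smul_mul, hNNt]
    rw [← hsplit]
    refine quadform_diag_nonneg _ _ (fun k => ?_) v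
    have hk : k ≤ (⟨r - 1, Nat.sub_lt hr Nat.one_pos⟩ : Fin r) := by
      have hkv := k.isLt
      exact Fin.le_def.mpr (by simp only [] ; omega)
    have := hmono k _ hk
    rw [hσ]; linarith
  have heig : σ * tΔ ≤ tp + tb := by
    have h1 : Matrix.trace (Δ * (Bm - σ • (1 : Matrix (Fin r) (Fin r) ℝ)))
        = (tp + tb) - σ * tΔ := by
      rw [Matrix.mul_sub, Matrix.trace_sub, Matrix.mul_smul, Matrix.mul_one, Matrix.trace_smul,
        htp, htb, htΔ, hS, Matrix.mul_sub, Matrix.trace_sub, smul_eq_mul]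
      ring
    have h2 : 0 ≤ Matrix.trace (Δ * (Bm - σ • (1 : Matrix (Fin r) (Fin r) ℝ))) := by
      rw [← hHH, Matrix.mul_assoc]
      exact (Matrix.mul_assoc Hᵀ H _) ▸ trace_HtHQ H _ hquad
    linarith
  -- distance facts
  have hmem : Zb ∈ solSet Zstar := ⟨U, hU, hZb⟩
  have hbdd : BddBelow (Set.range fun Zt : solSet Zstar =>
      frobNorm (Z - (Zt : Matrix (Fin n) (Fin r) ℝ))) := by
    refine ⟨0, ?_⟩
    rintro x ⟨Zt, rfl⟩
    exact Real.sqrt_nonneg _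
  have hdle : dSol Z Zstar ≤ frobNorm (Z - Zb) := ciInf_le hbdd ⟨Zb, hmem⟩
  have hdnn : 0 ≤ dSol Z Zstar := Real.iInf_nonneg fun Zt => Real.sqrt_nonneg _
  have hdsq : dSol Z Zstar ^ 2 ≤ tΔ := by
    have h1 : frobNorm (Z - Zb) ^ 2 = tΔ := by
      rw [frobNorm_sq, frobInner_eq_trace, ← hH, hHH, htΔ]
    calc dSol Z Zstar ^ 2 ≤ frobNorm (Z - Zb) ^ 2 := pow_le_pow_left₀ hdnn hdle 2
    _ = tΔ := h1
  have htΔ0 : 0 ≤ tΔ := le_trans (sq_nonneg _) hdsq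
  -- final scalar chain
  obtain ⟨c2, hc2def⟩ : ∃ x : ℝ, x = Real.sqrt 2 := ⟨_, rfl⟩
  have hc2sq : c2 ^ 2 = 2 := by rw [hc2def]; exact Real.sq_sqrt (by norm_num)
  have hc2nn : 0 ≤ c2 := hc2def ▸ Real.sqrt_nonneg 2
  have hc2ge1 : 1 ≤ c2 := by nlinarith [hc2sq, hc2nn]
  have hc2le2 : c2 ≤ 2 := by nlinarith [hc2sq, hc2nn]
  have hσpos : 0 < σ := hσ ▸ hpos _
  have hkey : 2 * c2 * tb ≤ ta + 2 * ts := by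
    rcases le_or_gt tb 0 with htbneg | htbpos
    · nlinarith [hta0, hts0, hc2nn, mul_nonneg hc2nn (neg_nonneg.mpr htbneg)]
    · have h8 : (2 * c2 * tb) ^ 2 ≤ (ta + 2 * ts) ^ 2 := by
        nlinarith [hCS, sq_nonneg (ta - 2 * ts), hc2sq, sq_nonneg tb]
      have hxnn : 0 ≤ 2 * c2 * tb := by positivity
      have hynn : 0 ≤ ta + 2 * ts := by linarith
      exact (pow_le_pow_iff_left₀ hxnn hynn (by norm_num)).mp h8
  have hfin : (2 * c2 - 2) * (tp + tb) ≤ ta + 2 * tp + 2 * ts - 2 * tb := by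
    nlinarith [hkey, htp0, mul_nonneg (sub_nonneg.mpr hc2le2) htp0]
  have hchain : (2 * c2 - 2) * σ * dSol Z Zstar ^ 2 ≤ ta + 2 * tp + 2 * ts - 2 * tb := by
    have hcoef : 0 ≤ (2 * c2 - 2) * σ := by
      apply mul_nonneg _ hσpos.le
      linarith
    calc (2 * c2 - 2) * σ * dSol Z Zstar ^ 2 ≤ (2 * c2 - 2) * σ * tΔ :=
          mul_le_mul_of_nonneg_left hdsq hcoef
    _ = (2 * c2 - 2) * (σ * tΔ) := by ring
    _ ≤ (2 * c2 - 2) * (tp + tb) := by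
        apply mul_le_mul_of_nonneg_left heig
        linarith
    _ ≤ ta + 2 * tp + 2 * ts - 2 * tb := hfin
  rw [ge_iff_le, hLHS, identity, ← hσ, ← hc2def]
  exact hchain
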